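/- Let Y₅ = (1/r)(x,σ₁×σ₂), Y₆ = (1/r)(x,σ₁), Y₇ = (1/r)(x,σ₂−σ₁). Then the following commutation relations hold: [K, Y₆] = 2i Y₅, [K, Y₅] = 4i Y₇, [K, Y₇] = −4i Y₅, and [Y₆, Y₇] = 0. -/

import Mathlib

noncomputable section

open scoped BigOperators

/-- The spinor space `ℂ⁴ = ℂ² ⊗ ℂ²`, realized as functions on `Fin 2 × Fin 2`. -/
abbrev Spinor : Type := Fin 2 × Fin 2 → ℂ

/-- Wave functions on `ℝ³` (in the statements they are restricted to functions
that are smooth away from the origin). -/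
abbrev WaveFn : Type := (Fin 3 → ℝ) → Spinor

/-- Operators: `ℂ`-linear combinations and compositions are formed pointwise. -/
abbrev Op : Type := WaveFn → WaveFn

/-- The commutator `[A,B] = AB − BA`. -/
def opComm (A B : Op) : Op := fun ψ => A (B ψ) - B (A ψ)

/-- The identity operator. -/
def idOp : Op := fun ψ => ψ

/-- The Euclidean norm `r = |x|`. -/
def rfun (x : Fin 3 → ℝ) : ℝ := Real.sqrt (∑ k, x k ^ 2)

/-- Multiplication by a radial function `f(r)`. -/
def mulR (f : ℝ → ℝ) : Op := fun ψ x => (f (rfun x) : ℂ) • ψ x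

/-- The position operator `x_k` (multiplication by the k-th coordinate). -/
def xOp (k : Fin 3) : Op := fun ψ x => (x k : ℂ) • ψ x

/-- The momentum operator `p_k = -ihbar ∂/∂x_k`. -/
def pOp (hbar : ℝ) (k : Fin 3) : Op :=
  fun ψ x => (-(Complex.I * (hbar : ℂ))) • fderiv ℝ ψ x (Pi.single k 1)

/-- The Laplacian `Δ = Σ_k ∂²/∂x_k²`. -/
def lap : Op :=
  fun ψ x => ∑ k, fderiv ℝ (fun y => fderiv ℝ ψ y (Pi.single k 1)) x (Pi.single k 1)

/-- The totally antisymmetric Levi-Civita symbol `ε_{ijk}` on `Fin 3`. -/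
def eps (i j k : Fin 3) : ℂ :=
  ((j.1 : ℂ) - (i.1 : ℂ)) * ((k.1 : ℂ) - (i.1 : ℂ)) * ((k.1 : ℂ) - (j.1 : ℂ)) / 2

/-- The standard Pauli matrices `σ¹, σ², σ³`. -/
def pauli : Fin 3 → Matrix (Fin 2) (Fin 2) ℂ :=
  ![!![0, 1; 1, 0], !![0, -Complex.I; Complex.I, 0], !![1, 0; 0, -1]]

/-- `(σ₁)_k = σ^k ⊗ I₂`, acting on the first tensor factor. -/
def sigma1 (k : Fin 3) : Op := fun ψ x ab => ∑ j, pauli k ab.1 j * ψ x (j, ab.2)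

/-- `(σ₂)_k = I₂ ⊗ σ^k`, acting on the second tensor factor. -/
def sigma2 (k : Fin 3) : Op := fun ψ x ab => ∑ j, pauli k ab.2 j * ψ x (ab.1, j)

/-- Dot product of triples of operators: `(A,B) = Σ_k A_k B_k`. -/
def dot (A B : Fin 3 → Op) : Op := ∑ k, A k ∘ B k

/-- Cross product of triples of operators: `(A×B)_k = ε_{klm} A_l B_m`. -/
def cross (A B : Fin 3 → Op) (k : Fin 3) : Op := ∑ l, ∑ m, eps k l m • (A l ∘ B m)

/-- The angular momentum `L_k = ε_{klm} x_l p_m`. -/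
def LOp (hbar : ℝ) (k : Fin 3) : Op := ∑ l, ∑ m, eps k l m • (xOp l ∘ pOp hbar m)

/-- The spin-exchange operator `K = (σ₁,σ₂)`. -/
def KOp : Op := dot sigma1 sigma2

/-- `σ₁ + σ₂` componentwise. -/
def sigmaSum (k : Fin 3) : Op := sigma1 k + sigma2 k

/-- `σ₁ − σ₂` componentwise. -/
def sigmaDiff (k : Fin 3) : Op := sigma1 k - sigma2 k

/-- The general rotationally invariant two-spin Hamiltonian
`H = −(hbar²/2)Δ + V₀(r) + ½V₁(r)(σ₁+σ₂,L) + V₂(r)K + V₃(r)(x,σ₁)(x,σ₂)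
    + V₄(r)(σ₁,p)(σ₂,p) + ½V₅(r)[(σ₁,L)(σ₂,L)+(σ₂,L)(σ₁,L)]`. -/
def Ham (hbar : ℝ) (V₀ V₁ V₂ V₃ V₄ V₅ : ℝ → ℝ) : Op :=
  (-(hbar ^ 2 / 2) : ℂ) • lap + mulR V₀
    + ((1 : ℂ)/2) • (mulR V₁ ∘ dot sigmaSum (LOp hbar))
    + mulR V₂ ∘ KOp
    + mulR V₃ ∘ (dot xOp sigma1 ∘ dot xOp sigma2)
    + mulR V₄ ∘ (dot sigma1 (pOp hbar) ∘ dot sigma2 (pOp hbar))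
    + ((1 : ℂ)/2) • (mulR V₅ ∘ (dot sigma1 (LOp hbar) ∘ dot sigma2 (LOp hbar)
        + dot sigma2 (LOp hbar) ∘ dot sigma1 (LOp hbar)))


/-- `Y₅ = (1/r)(x,σ₁×σ₂)`. -/
def Y5 : Op := mulR (fun r => 1 / r) ∘ dot xOp (cross sigma1 sigma2)

/-- `Y₆ = (1/r)(x,σ₁)`. -/
def Y6 : Op := mulR (fun r => 1 / r) ∘ dot xOp sigma1

/-- `Y₇ = (1/r)(x,σ₂−σ₁)`. -/
def Y7 : Op := mulR (fun r => 1 / r) ∘ dot xOp (fun k => sigma2 k - sigma1 k)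

lemma KOp_apply (ψ : WaveFn) (x) (ab : Fin 2 × Fin 2) :
    KOp ψ x ab = ∑ k : Fin 3, ∑ i : Fin 2, ∑ j : Fin 2,
      pauli k ab.1 i * (pauli k ab.2 j * ψ x (i, j)) := by
  simp [KOp, dot, sigma1, sigma2, Finset.sum_apply, Function.comp, Finset.mul_sum, mul_add]

lemma Y6_apply (ψ : WaveFn) (x) (ab : Fin 2 × Fin 2) :
    Y6 ψ x ab = (1 / (rfun x : ℂ)) * ∑ k : Fin 3, (x k : ℂ) *
      ∑ i : Fin 2, pauli k ab.1 i * ψ x (i, ab.2) := by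
  simp [Y6, dot, sigma1, mulR, xOp, Function.comp, Finset.sum_apply, Finset.mul_sum,
    smul_eq_mul, mul_assoc, mul_add]

lemma Y7_apply (ψ : WaveFn) (x) (ab : Fin 2 × Fin 2) :
    Y7 ψ x ab = (1 / (rfun x : ℂ)) * ∑ k : Fin 3, (x k : ℂ) *
      ((∑ j : Fin 2, pauli k ab.2 j * ψ x (ab.1, j))
        - ∑ i : Fin 2, pauli k ab.1 i * ψ x (i, ab.2)) := by
  simp [Y7, dot, sigma1, sigma2, mulR, xOp, Function.comp, Finset.sum_apply, Finset.mul_sum,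
    smul_eq_mul, mul_sub, mul_assoc, mul_add, Pi.sub_apply, smul_sub]

lemma Y5_apply (ψ : WaveFn) (x) (ab : Fin 2 × Fin 2) :
    Y5 ψ x ab = (1 / (rfun x : ℂ)) * ∑ k : Fin 3, (x k : ℂ) *
      ∑ l : Fin 3, ∑ m : Fin 3, eps k l m *
        ∑ i : Fin 2, pauli l ab.1 i * ∑ j : Fin 2, pauli m ab.2 j * ψ x (i, j) := by
  simp [Y5, dot, cross, sigma1, sigma2, mulR, xOp, Function.comp, Finset.sum_apply,
    Finset.mul_sum, smul_eq_mul, mul_assoc, mul_add]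

lemma vec3_two {α : Type*} (a b c : α) : ![a, b, c] 2 = c := rfl

set_option maxHeartbeats 2000000 in
/-- `[K,Y₆] = 2iY₅`, `[K,Y₅] = 4iY₇`, `[K,Y₇] = −4iY₅` and `[Y₆,Y₇] = 0`. -/
theorem statement14
    (ψ : WaveFn) (hψ : ContDiffOn ℝ (⊤ : ℕ∞) ψ {x : Fin 3 → ℝ | x ≠ 0})
    (x : Fin 3 → ℝ) (hx : x ≠ 0) :
    opComm KOp Y6 ψ x = ((2 * Complex.I) • Y5) ψ x
    ∧ opComm KOp Y5 ψ x = ((4 * Complex.I) • Y7) ψ x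
    ∧ opComm KOp Y7 ψ x = ((-(4 * Complex.I)) • Y5) ψ x
    ∧ opComm Y6 Y7 ψ x = 0 := by
  refine ⟨?_, ?_, ?_, ?_⟩ <;>
  · funext ab
    obtain ⟨a, b⟩ := ab
    simp only [opComm, Pi.sub_apply, Pi.smul_apply, Pi.zero_apply, smul_eq_mul,
      KOp_apply, Y5_apply, Y6_apply, Y7_apply]
    fin_cases a <;> fin_cases b <;>
    · simp only [Fin.sum_univ_three, Fin.sum_univ_two, Fin.isValue]
      norm_num [pauli, eps, Fin.isValue, vec3_two]
      ring_nf
      all_goals simp only [Complex.I_sq, show (Complex.I ^ 3 : ℂ) = -Complex.I by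
        rw [pow_succ, Complex.I_sq]; ring,
        show (Complex.I ^ 4 : ℂ) = 1 by rw [show (4:ℕ) = 2*2 from rfl, pow_mul, Complex.I_sq]; ring]
      all_goals ring
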